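/- The stick-breaking weights of the Pitman-Yor process sum to one almost surely: if V_j are independent Beta(1-σ, ϑ+jσ) random variables with σ ∈ [0,1), ϑ > -σ, and p_j = V_j ∏_{l<j}(1-V_l), then Σ_{j=1}^∞ p_j = 1 almost surely. -/

import Mathlib

open MeasureTheory

/-- The law of a `Beta(a, b)` random variable, given by its density
`x ↦ Γ(a+b)/(Γ(a)Γ(b)) x^(a-1) (1-x)^(b-1)` on `(0,1)`. -/
noncomputable def betaLaw (a b : ℝ) : Measure ℝ :=
  (volume.restrict (Set.Ioo (0 : ℝ) 1)).withDensity
    (fun x => ENNReal.ofReal ((Real.Gamma (a + b) / (Real.Gamma a * Real.Gamma b)) *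
      x ^ (a - 1) * (1 - x) ^ (b - 1)))

open Real Filter ProbabilityTheory
open scoped ENNReal Topology

lemma realBetaIntegral {a b : ℝ} (ha : 0 < a) (hb : 0 < b) :
    ∫ x in Set.Ioo (0:ℝ) 1, x ^ (a - 1) * (1 - x) ^ (b - 1) =
      Gamma a * Gamma b / Gamma (a + b) := by
  have h := Complex.Gamma_mul_Gamma_eq_betaIntegral (s := a) (t := b) (by simpa) (by simpa)
  have hbi : Complex.betaIntegral a b =
      ((∫ x in (0:ℝ)..1, x ^ (a - 1) * (1 - x) ^ (b - 1) : ℝ) : ℂ) := by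
    rw [Complex.betaIntegral, ← intervalIntegral.integral_ofReal]
    refine intervalIntegral.integral_congr fun x hx => ?_
    rw [Set.uIcc_of_le (by norm_num)] at hx
    rw [Complex.ofReal_mul, Complex.ofReal_cpow hx.1,
      Complex.ofReal_cpow (by linarith [hx.2] : (0:ℝ) ≤ 1 - x)]
    push_cast
    ring_nf
  rw [hbi] at h
  have hne : Complex.Gamma (a + b) ≠ 0 := by
    rw [← Complex.ofReal_add, Complex.Gamma_ofReal]
    exact_mod_cast (Real.Gamma_pos_of_pos (by linarith)).ne'
  have hI : ∫ x in (0:ℝ)..1, x ^ (a - 1) * (1 - x) ^ (b - 1) = Gamma a * Gamma b / Gamma (a + b) := by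
    have := h
    rw [Complex.Gamma_ofReal, Complex.Gamma_ofReal, ← Complex.ofReal_add, Complex.Gamma_ofReal] at this
    have h2 : ((Gamma a * Gamma b : ℝ) : ℂ) = ((Gamma (a+b) * ∫ x in (0:ℝ)..1, x ^ (a - 1) * (1 - x) ^ (b - 1) : ℝ) : ℂ) := by
      push_cast; exact this
    have h3 := Complex.ofReal_injective h2
    field_simp
    linarith [h3]
  rw [← hI, intervalIntegral.integral_of_le (by norm_num : (0:ℝ) ≤ 1)]
  exact setIntegral_congr_set Ioo_ae_eq_Ioc

lemma realBetaIntegrable {a b : ℝ} (ha : 0 < a) (hb : 0 < b) :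
    IntegrableOn (fun x : ℝ => x ^ (a - 1) * (1 - x) ^ (b - 1)) (Set.Ioo 0 1) := by
  have h := Complex.betaIntegral_convergent (u := a) (v := b) (by simpa) (by simpa)
  rw [intervalIntegrable_iff, Set.uIoc_of_le (by norm_num : (0:ℝ) ≤ 1)] at h
  have h2 : IntegrableOn (fun x : ℝ =>
      ((x:ℂ) ^ ((a:ℂ) - 1) * (1 - (x:ℂ)) ^ ((b:ℂ) - 1)).re) (Set.Ioc 0 1) :=
    (Complex.reCLM : ℂ →L[ℝ] ℝ).integrable_comp h
  refine ((h2.mono_set Set.Ioo_subset_Ioc_self).congr_fun (fun x hx => ?_) measurableSet_Ioo)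
  have : ((x:ℂ) ^ ((a:ℂ) - 1) * (1 - (x:ℂ)) ^ ((b:ℂ) - 1)) =
      ((x ^ (a - 1) * (1 - x) ^ (b - 1) : ℝ) : ℂ) := by
    rw [Complex.ofReal_mul, Complex.ofReal_cpow hx.1.le,
      Complex.ofReal_cpow (by linarith [hx.2] : (0:ℝ) ≤ 1 - x)]
    push_cast
    ring_nf
  simp only [this, Complex.ofReal_re]

lemma betaLaw_lintegral_one_sub {a b : ℝ} (ha : 0 < a) (hb : 0 < b) :
    ∫⁻ x, ENNReal.ofReal (1 - x) ∂(betaLaw a b) = ENNReal.ofReal (b / (a + b)) := by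
  have hCpos : 0 < Real.Gamma (a + b) / (Real.Gamma a * Real.Gamma b) := div_pos (Real.Gamma_pos_of_pos (by linarith))
    (mul_pos (Real.Gamma_pos_of_pos ha) (Real.Gamma_pos_of_pos hb))
  set C : ℝ := Real.Gamma (a + b) / (Real.Gamma a * Real.Gamma b) with hC
  have hgmeas : Measurable (fun x : ℝ => ENNReal.ofReal (C * x ^ (a - 1) * (1 - x) ^ (b - 1))) := by
    refine ENNReal.measurable_ofReal.comp ?_
    exact ((measurable_const.mul (measurable_id.pow_const _)).mul
      ((measurable_const.sub measurable_id).pow_const _))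
  rw [betaLaw, ← hC, lintegral_withDensity_eq_lintegral_mul _ hgmeas ((show Measurable fun x : ℝ => ENNReal.ofReal (1 - x) from
      (measurable_const.sub measurable_id).ennreal_ofReal))]
  simp only [Pi.mul_apply]
  have hcongr : ∫⁻ x in Set.Ioo (0:ℝ) 1,
      ENNReal.ofReal (C * x ^ (a - 1) * (1 - x) ^ (b - 1)) * ENNReal.ofReal (1 - x)
      = ∫⁻ x in Set.Ioo (0:ℝ) 1,
        ENNReal.ofReal (C * (x ^ (a - 1) * (1 - x) ^ (b + 1 - 1))) := by
    refine setLIntegral_congr_fun measurableSet_Ioo (fun x hx => ?_)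
    have h1x : (0:ℝ) < 1 - x := by linarith [hx.2]
    rw [← ENNReal.ofReal_mul (mul_nonneg (mul_nonneg hCpos.le (Real.rpow_nonneg hx.1.le _))
      (Real.rpow_nonneg h1x.le _))]
    congr 1
    have h1 : (1 - x) ^ (b - 1) * (1 - x) = (1 - x) ^ (b + 1 - 1) := by
      rw [show b + 1 - 1 = (b - 1) + 1 by ring, Real.rpow_add_one h1x.ne' (b-1)]
    rw [← h1]; ring
  rw [hcongr]
  have hInt : IntegrableOn (fun x : ℝ => C * (x ^ (a - 1) * (1 - x) ^ (b + 1 - 1)))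
      (Set.Ioo 0 1) := (realBetaIntegrable ha (by linarith : (0:ℝ) < b + 1)).const_mul C
  rw [← ofReal_integral_eq_lintegral_ofReal hInt]
  · rw [MeasureTheory.integral_const_mul, realBetaIntegral ha (by linarith : (0:ℝ) < b + 1)]
    congr 1
    rw [Real.Gamma_add_one hb.ne', show a + (b+1) = (a+b) + 1 by ring,
      Real.Gamma_add_one (by linarith : a + b ≠ 0)]
    have g1 := (Real.Gamma_pos_of_pos ha).ne'
    have g2 := (Real.Gamma_pos_of_pos hb).ne'
    have g3 := (Real.Gamma_pos_of_pos (by linarith : (0:ℝ) < a + b)).ne'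
    have key : Gamma a * Gamma b * ((Gamma a)⁻¹ * (Gamma b)⁻¹) = 1 := by
      field_simp
    field_simp
    linear_combination Gamma (a + b) * key
  · refine (ae_restrict_iff' measurableSet_Ioo).2 (Filter.Eventually.of_forall fun x hx => ?_)
    have h1x : (0:ℝ) < 1 - x := by linarith [hx.2]
    exact mul_nonneg hCpos.le (mul_nonneg (Real.rpow_nonneg hx.1.le _) (Real.rpow_nonneg h1x.le _))

lemma aux_one_add_sum_le_prod (s : Finset ℕ) (x : ℕ → ℝ) (hx : ∀ i ∈ s, 0 ≤ x i) :
    1 + ∑ i ∈ s, x i ≤ ∏ i ∈ s, (1 + x i) := by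
  induction s using Finset.cons_induction with
  | empty => simp
  | cons i s hi ih =>
    rw [Finset.prod_cons, Finset.sum_cons]
    have h1 := hx i (Finset.mem_cons_self i s)
    have h2 : ∀ j ∈ s, 0 ≤ x j := fun j hj => hx j (Finset.mem_cons_of_mem hj)
    have h3 := ih h2
    have h4 : 0 ≤ ∑ j ∈ s, x j := Finset.sum_nonneg h2
    nlinarith

lemma aux_sum_Icc_one (g : ℕ → ℝ) (n : ℕ) :
    ∑ l ∈ Finset.Icc 1 n, g l = ∑ i ∈ Finset.range n, g (i + 1) := by
  induction n with
  | zero => simp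
  | succ n ih => rw [Finset.sum_Icc_succ_top (by omega), ih, Finset.sum_range_succ]


/-- The stick-breaking weights of the Pitman-Yor process sum to one almost surely. -/
theorem py_stick_breaking_weights_sum_to_one
    {Ω : Type*} [MeasurableSpace Ω] (μ : Measure Ω) [IsProbabilityMeasure μ]
    (σ ϑ : ℝ) (hσ0 : 0 ≤ σ) (hσ1 : σ < 1) (hϑ : -σ < ϑ)
    (V : ℕ → Ω → ℝ)
    (hindep : ProbabilityTheory.iIndepFun V μ)
    (hmeas : ∀ j, Measurable (V j))
    (hlaw : ∀ j : ℕ, 1 ≤ j → μ.map (V j) = betaLaw (1 - σ) (ϑ + j * σ)) :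
    ∀ᵐ ω ∂μ, ∑' j : ℕ, (V (j + 1) ω * ∏ l ∈ Finset.Icc 1 j, (1 - V l ω)) = 1 := by
  have ha : 0 < 1 - σ := by linarith
  have hb : ∀ l : ℕ, 1 ≤ l → 0 < ϑ + l * σ := by
    intro l hl
    have h1 : (1:ℝ) ≤ l := by exact_mod_cast hl
    nlinarith
  set f : ℕ → Ω → ℝ≥0∞ := fun l ω => ENNReal.ofReal (1 - V l ω) with hfdef
  have hfmeas : ∀ l, Measurable (f l) := fun l => (measurable_const.sub (hmeas l)).ennreal_ofReal
  have hf_indep : iIndepFun f μ :=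
    hindep.comp (fun _ x => ENNReal.ofReal (1 - x))
      (fun _ => (measurable_const.sub measurable_id).ennreal_ofReal)
  have hm : ∀ l : ℕ, 1 ≤ l → ∫⁻ ω, f l ω ∂μ
      = ENNReal.ofReal ((ϑ + l * σ) / ((1 - σ) + (ϑ + l * σ))) := by
    intro l hl
    have h1 : ∫⁻ ω, f l ω ∂μ = ∫⁻ x, ENNReal.ofReal (1 - x) ∂(μ.map (V l)) :=
      (lintegral_map (measurable_const.sub measurable_id).ennreal_ofReal (hmeas l)).symm
    rw [h1, hlaw l hl, betaLaw_lintegral_one_sub ha (hb l hl)]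
  set Q : ℕ → Ω → ℝ≥0∞ := fun n => ∏ l ∈ Finset.Icc 1 n, f l with hQdef
  have hQmeas : ∀ n, Measurable (Q n) := by
    intro n
    have : Q n = fun ω => ∏ l ∈ Finset.Icc 1 n, f l ω := by
      funext ω; exact Finset.prod_apply ω _ _
    rw [this]
    exact Finset.measurable_prod _ (fun l _ => hfmeas l)
  have hprod : ∀ n : ℕ, ∫⁻ ω, Q n ω ∂μ = ∏ l ∈ Finset.Icc 1 n, ∫⁻ ω, f l ω ∂μ := by
    intro n
    induction n with
    | zero => simp [hQdef]
    | succ n ih =>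
      have hnm : (n+1) ∉ Finset.Icc 1 n := by simp
      have hins : Finset.Icc 1 (n+1) = insert (n+1) (Finset.Icc 1 n) :=
        (Finset.insert_Icc_right_eq_Icc_add_one (by omega)).symm
      have hQs : Q (n+1) = Q n * f (n+1) := by
        rw [hQdef]; simp only [hins, Finset.prod_insert hnm]; rw [mul_comm]
      have hind : IndepFun (Q n) (f (n+1)) μ :=
        hf_indep.indepFun_finsetProd_of_notMem hfmeas hnm
      rw [hQs, ProbabilityTheory.lintegral_mul_eq_lintegral_mul_lintegral_of_indepFun
        (hQmeas n) (hfmeas (n+1)) hind, ih, hins, Finset.prod_insert hnm, mul_comm]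
  set c : ℕ → ℝ := fun n => ∏ l ∈ Finset.Icc 1 n, ((ϑ + l * σ) / ((1 - σ) + (ϑ + l * σ)))
    with hcdef
  have hQint : ∀ n, ∫⁻ ω, Q n ω ∂μ = ENNReal.ofReal (c n) := by
    intro n
    rw [hprod n]
    have hcn : c n = ∏ l ∈ Finset.Icc 1 n, ((ϑ + l * σ) / ((1 - σ) + (ϑ + l * σ))) := rfl
    rw [hcn, Finset.prod_congr rfl (fun l hl => hm l (Finset.mem_Icc.1 hl).1)]
    refine (ENNReal.ofReal_prod_of_nonneg fun l hl => ?_).symm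
    have hbl := hb l (Finset.mem_Icc.1 hl).1
    positivity
  -- c n → 0
  have habs : 0 < |ϑ| + σ := by
    rcases lt_or_eq_of_le hσ0 with h | h
    · linarith [abs_nonneg ϑ]
    · have : 0 < ϑ := by rw [← h] at hϑ; simpa using hϑ
      have := abs_pos.2 this.ne'
      linarith
  have hcpos : ∀ n, 0 < c n := by
    intro n
    refine Finset.prod_pos fun l hl => ?_
    have hbl := hb l (Finset.mem_Icc.1 hl).1
    positivity
  have hcinv : ∀ n, (c n)⁻¹ = ∏ l ∈ Finset.Icc 1 n, (1 + (1 - σ) / (ϑ + l * σ)) := by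
    intro n
    rw [hcdef, ← Finset.prod_inv_distrib]
    refine Finset.prod_congr rfl fun l hl => ?_
    have hbl := hb l (Finset.mem_Icc.1 hl).1
    rw [inv_div]
    rw [one_add_div hbl.ne']
    ring
  have hineq : ∀ n, 1 + ((1 - σ) / (|ϑ| + σ)) * ∑ i ∈ Finset.range n, 1 / ((i:ℝ) + 1)
      ≤ (c n)⁻¹ := by
    intro n
    rw [hcinv n]
    refine le_trans ?_ (aux_one_add_sum_le_prod _ _ fun l hl => by
      have hbl := hb l (Finset.mem_Icc.1 hl).1
      positivity)
    have hsum : ((1 - σ) / (|ϑ| + σ)) * ∑ i ∈ Finset.range n, 1 / ((i:ℝ) + 1)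
        ≤ ∑ l ∈ Finset.Icc 1 n, (1 - σ) / (ϑ + l * σ) := by
      rw [aux_sum_Icc_one (fun l => (1 - σ) / (ϑ + l * σ)) n, Finset.mul_sum]
      refine Finset.sum_le_sum fun i _ => ?_
      have hbl : 0 < ϑ + ((i:ℝ) + 1) * σ := by
        have := hb (i+1) (by omega)
        push_cast at this
        linarith
      have hcast : ((i+1 : ℕ) : ℝ) = (i:ℝ) + 1 := by push_cast; ring
      rw [hcast]
      rw [div_mul_div_comm, mul_one]
      refine div_le_div_of_nonneg_left (by linarith) hbl ?_
      have h1 : ϑ ≤ |ϑ| * ((i:ℝ)+1) := by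
        nlinarith [le_abs_self ϑ, abs_nonneg ϑ, (by positivity : (0:ℝ) ≤ (i:ℝ))]
      nlinarith [(by positivity : (0:ℝ) ≤ (i:ℝ))]
    linarith
  have hctend : Tendsto c atTop (𝓝 0) := by
    have hinvtend : Tendsto (fun n => (c n)⁻¹) atTop atTop := by
      refine tendsto_atTop_mono hineq ?_
      have hK : 0 < (1 - σ) / (|ϑ| + σ) := by positivity
      have := tendsto_atTop_add_const_left atTop (1:ℝ)
        (tendsto_sum_range_one_div_nat_succ_atTop.const_mul_atTop hK)
      simpa using this
    have h2 : Tendsto (fun n => ((c n)⁻¹)⁻¹) atTop (𝓝 0) := hinvtend.inv_tendsto_atTop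
    simpa only [inv_inv] using h2
  have hQtend : Tendsto (fun n => ∫⁻ ω, Q n ω ∂μ) atTop (𝓝 0) := by
    simp_rw [hQint]
    have := (ENNReal.continuous_ofReal.tendsto 0).comp hctend
    simpa [Function.comp_def] using this
  set L : Ω → ℝ≥0∞ := fun ω => ⨅ n, Q n ω with hLdef
  have hLmeas : Measurable L := Measurable.iInf fun n => hQmeas n
  have hLle : ∀ n, ∫⁻ ω, L ω ∂μ ≤ ∫⁻ ω, Q n ω ∂μ :=
    fun n => lintegral_mono fun ω => iInf_le _ n
  have hL0 : ∫⁻ ω, L ω ∂μ = 0 :=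
    le_antisymm (ge_of_tendsto hQtend (Eventually.of_forall hLle)) zero_le
  have haeL : ∀ᵐ ω ∂μ, L ω = 0 := (lintegral_eq_zero_iff hLmeas).1 hL0
  have hmem : ∀ᵐ ω ∂μ, ∀ l, 1 ≤ l → V l ω ∈ Set.Ioo (0:ℝ) 1 := by
    rw [ae_all_iff]
    intro l
    by_cases hl : 1 ≤ l
    · have hmap : (μ.map (V l)) (Set.Ioo (0:ℝ) 1)ᶜ = 0 := by
        rw [hlaw l hl, betaLaw, withDensity_apply _ measurableSet_Ioo.compl,
          Measure.restrict_restrict measurableSet_Ioo.compl, Set.compl_inter_self]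
        simp
      have hpre : μ ((V l) ⁻¹' (Set.Ioo (0:ℝ) 1)ᶜ) = 0 := by
        rw [← Measure.map_apply (hmeas l) measurableSet_Ioo.compl]
        exact hmap
      rw [ae_iff]
      convert hpre using 2
      ext ω
      simp [hl]
    · exact Eventually.of_forall fun ω h => absurd h hl
  filter_upwards [hmem, haeL] with ω hωmem hωL
  have hfac : ∀ l, 1 ≤ l → 0 < 1 - V l ω ∧ 1 - V l ω < 1 := fun l hl =>
    ⟨by linarith [(hωmem l hl).2], by linarith [(hωmem l hl).1]⟩
  set P : ℕ → ℝ := fun n => ∏ l ∈ Finset.Icc 1 n, (1 - V l ω) with hPdef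
  have hPpos : ∀ n, 0 < P n :=
    fun n => Finset.prod_pos fun l hl => (hfac l (Finset.mem_Icc.1 hl).1).1
  have hQP : ∀ n, Q n ω = ENNReal.ofReal (P n) := by
    intro n
    rw [hQdef]
    simp only [Finset.prod_apply]
    rw [hPdef, ← ENNReal.ofReal_prod_of_nonneg
      (fun l hl => (hfac l (Finset.mem_Icc.1 hl).1).1.le)]
  have hPsucc : ∀ n, P (n+1) = (1 - V (n+1) ω) * P n := by
    intro n
    rw [hPdef]
    simp only
    rw [← Finset.insert_Icc_right_eq_Icc_add_one (by omega : 1 ≤ n + 1),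
      Finset.prod_insert (by simp : (n+1) ∉ Finset.Icc 1 n)]
  have hPanti : Antitone P := antitone_nat_of_succ_le fun n => by
    rw [hPsucc n]
    have h1 := (hfac (n+1) (by omega)).1
    have h2 := hPpos n
    have h3 : 1 - V (n+1) ω ≤ 1 := by linarith [(hωmem (n+1) (by omega)).1]
    nlinarith
  have hbdd : BddBelow (Set.range P) := ⟨0, fun x ⟨n, hn⟩ => hn ▸ (hPpos n).le⟩
  have hPinf0 : ⨅ n, P n = 0 := by
    have h1 : ENNReal.ofReal (⨅ n, P n) = 0 := by
      refine le_antisymm ?_ zero_le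
      rw [← hωL, hLdef]
      refine le_iInf fun n => ?_
      rw [hQP n]
      exact ENNReal.ofReal_le_ofReal (ciInf_le hbdd n)
    have h2 : ⨅ n, P n ≤ 0 := ENNReal.ofReal_eq_zero.1 h1
    have h3 : (0:ℝ) ≤ ⨅ n, P n := le_ciInf fun n => (hPpos n).le
    linarith
  have hPtend : Tendsto P atTop (𝓝 0) := by
    have := tendsto_atTop_ciInf hPanti hbdd
    rwa [hPinf0] at this
  have hS : ∀ n, ∑ j ∈ Finset.range n,
      (V (j+1) ω * ∏ l ∈ Finset.Icc 1 j, (1 - V l ω)) = 1 - P n := by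
    intro n
    induction n with
    | zero => simp [hPdef]
    | succ n ih =>
      have hterm : V (n+1) ω * ∏ l ∈ Finset.Icc 1 n, (1 - V l ω) = V (n+1) ω * P n := rfl
      rw [Finset.sum_range_succ, ih, hterm, hPsucc n]
      ring
  have hHasSum : HasSum (fun j => V (j+1) ω * ∏ l ∈ Finset.Icc 1 j, (1 - V l ω)) 1 := by
    rw [hasSum_iff_tendsto_nat_of_nonneg]
    · simp_rw [hS]
      have h := Filter.Tendsto.sub
        (tendsto_const_nhds : Tendsto (fun _ : ℕ => (1:ℝ)) atTop (𝓝 1)) hPtend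
      simpa using h
    · intro j
      refine mul_nonneg (hωmem (j+1) (by omega)).1.le ?_
      exact Finset.prod_nonneg fun l hl => (hfac l (Finset.mem_Icc.1 hl).1).1.le
  exact hHasSum.tsum_eq
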